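/- Let T̄ > 0 and γ > 0. Let A : [0,T̄] → ℝ^{n×n} be continuous with A(τ) Metzler for every τ, let E_c : [0,T̄] → ℝ^{n×p_c}, C_c : [0,T̄] → ℝ^{q_c×n}, F_c : [0,T̄] → ℝ^{q_c×p_c} be continuous and entrywise nonnegative, and let J ≥ 0, E_d ≥ 0, C_d ≥ 0, F_d ≥ 0 be constant matrices; let Φ be the state-transition matrix of A. Then the following are equivalent: (a) there exists a vector λ ∈ ℝ^n with λ > 0 such that (J Φ(T̄,0) − I)λ + J ∫₀^{T̄} Φ(T̄,s) E_c(s) 𝟙 ds + E_d𝟙 < 0, C_c(τ)(Φ(τ,0)λ + ∫₀^{τ} Φ(τ,s) E_c(s) 𝟙 ds) + F_c(τ)𝟙 < γ𝟙 for all τ ∈ [0,T̄], and C_d(Φ(T̄,0)λ + ∫₀^{T̄} Φ(T̄,s) E_c(s) 𝟙 ds) + F_d𝟙 < γ𝟙; (b) there exists a continuously differentiable function ζ : [0,T̄] → ℝ^n with ζ(0) > 0 such that −ζ̇(τ) + A(τ)ζ(τ) + E_c(τ)𝟙 < 0 and C_c(τ)ζ(τ) + F_c(τ)𝟙 − γ𝟙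 < 0 for all τ ∈ [0,T̄], and J ζ(T̄) − ζ(0) + E_d𝟙 < 0 and C_d ζ(T̄) + F_d𝟙 − γ𝟙 < 0. -/

import Mathlib

open Matrix Set intervalIntegral

open Matrix Set intervalIntegral MeasureTheory Filter

lemma mulVec_norm_le {n m : ℕ} (A : Matrix (Fin n) (Fin m) ℝ) {C : ℝ} (hC0 : 0 ≤ C)
    (hC : ∀ i j, |A i j| ≤ C) (x : Fin m → ℝ) : ‖A *ᵥ x‖ ≤ m * C * ‖x‖ := by
  have hnn : (0:ℝ) ≤ m * C * ‖x‖ := by positivity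
  rw [pi_norm_le_iff_of_nonneg hnn]
  intro i
  calc ‖(A *ᵥ x) i‖ = |∑ j, A i j * x j| := by
        simp [Matrix.mulVec, dotProduct, Real.norm_eq_abs]
  _ ≤ ∑ j, |A i j * x j| := Finset.abs_sum_le_sum_abs _ _
  _ ≤ ∑ _j : Fin m, C * ‖x‖ := Finset.sum_le_sum fun j _ => by
        rw [abs_mul]
        exact mul_le_mul (hC i j) ((Real.norm_eq_abs _) ▸ norm_le_pi_norm x j)
          (abs_nonneg _) hC0
  _ = m * C * ‖x‖ := by simp [Finset.sum_const, mul_assoc]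

lemma mulVec_mono {n m : ℕ} (A : Matrix (Fin n) (Fin m) ℝ) (hA : ∀ i j, 0 ≤ A i j)
    {x y : Fin m → ℝ} (h : ∀ j, x j ≤ y j) : ∀ i, (A *ᵥ x) i ≤ (A *ᵥ y) i := by
  intro i
  simp only [Matrix.mulVec, dotProduct]
  exact Finset.sum_le_sum fun j _ => mul_le_mul_of_nonneg_left (h j) (hA i j)

section ODE
variable {n : ℕ} {Tb : ℝ} {At : ℝ → Matrix (Fin n) (Fin n) ℝ}
  {Φ : ℝ → ℝ → Matrix (Fin n) (Fin n) ℝ}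

lemma vec_deriv
    (hΦ : ∀ s ∈ Set.Icc (0 : ℝ) Tb, ∀ τ ∈ Set.Icc s Tb, ∀ i j,
      HasDerivWithinAt (fun u => Φ u s i j) ((At τ * Φ τ s) i j) (Set.Icc s Tb) τ)
    {s : ℝ} (hs : s ∈ Icc 0 Tb) (v : Fin n → ℝ) {τ : ℝ} (hτ : τ ∈ Icc s Tb) :
    HasDerivWithinAt (fun t => Φ t s *ᵥ v) (At τ *ᵥ (Φ τ s *ᵥ v)) (Icc s Tb) τ := by
  rw [hasDerivWithinAt_pi]
  intro i
  have h1 : ∀ t, (Φ t s *ᵥ v) i = ∑ j, Φ t s i j * v j := fun t => by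
    simp [Matrix.mulVec, dotProduct]
  have h2 : (At τ *ᵥ (Φ τ s *ᵥ v)) i = ∑ j, (At τ * Φ τ s) i j * v j := by
    rw [Matrix.mulVec_mulVec]
    simp [Matrix.mulVec, dotProduct]
  simp only [h1, h2]
  exact HasDerivWithinAt.fun_sum fun j _ => (hΦ s hs τ hτ i j).mul_const (v j)

lemma icc_mem_nhdsWithin_Ici {a b x : ℝ} (hx : x ∈ Ico a b) : Icc a b ∈ nhdsWithin x (Ici x) :=
  mem_nhdsWithin.2 ⟨Iio b, isOpen_Iio, hx.2, fun y hy => ⟨le_trans hx.1 hy.2, le_of_lt hy.1⟩⟩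

lemma norm_sol_le {K : ℝ} (hK : 0 ≤ K) {a b : ℝ} {f f' : ℝ → Fin n → ℝ}
    (hd : ∀ t ∈ Icc a b, HasDerivWithinAt f (f' t) (Icc a b) t)
    (hbound : ∀ t ∈ Icc a b, ‖f' t‖ ≤ K * ‖f t‖) :
    ∀ t ∈ Icc a b, ‖f t‖ ≤ ‖f a‖ * Real.exp (K * (t - a)) := by
  intro t ht
  have hcont : ContinuousOn f (Icc a b) := fun x hx => (hd x hx).continuousWithinAt
  have := norm_le_gronwallBound_of_norm_deriv_right_le (f := f) (f' := f') (δ := ‖f a‖)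
    (K := K) (ε := 0) (a := a) (b := b) hcont
    (fun x hx => (hd x (mem_Icc.2 ⟨hx.1, le_of_lt hx.2⟩)).mono_of_mem_nhdsWithin (icc_mem_nhdsWithin_Ici hx))
    le_rfl (fun x hx => by simpa using hbound x (mem_Icc.2 ⟨hx.1, le_of_lt hx.2⟩)) t ht
  rwa [gronwallBound_ε0] at this

end ODE

section ODE2
variable {n : ℕ} {Tb Ca : ℝ} {At : ℝ → Matrix (Fin n) (Fin n) ℝ}
  {Φ : ℝ → ℝ → Matrix (Fin n) (Fin n) ℝ}

variable (hTb : 0 < Tb) (hCa0 : 0 ≤ Ca)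
  (hCa : ∀ τ ∈ Icc (0:ℝ) Tb, ∀ i j, |At τ i j| ≤ Ca)
  (hΦ0 : ∀ s ∈ Set.Icc (0 : ℝ) Tb, Φ s s = 1)
  (hΦ : ∀ s ∈ Set.Icc (0 : ℝ) Tb, ∀ τ ∈ Set.Icc s Tb, ∀ i j,
      HasDerivWithinAt (fun u => Φ u s i j) ((At τ * Φ τ s) i j) (Set.Icc s Tb) τ)

include hCa0 hCa in
lemma At_mulVec_norm_le {τ : ℝ} (hτ : τ ∈ Icc (0:ℝ) Tb) (x : Fin n → ℝ) :
    ‖At τ *ᵥ x‖ ≤ (n * Ca) * ‖x‖ :=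
  mulVec_norm_le (At τ) hCa0 (hCa τ hτ) x

include hTb hCa0 hCa hΦ0 hΦ in
lemma sol_bound {s : ℝ} (hs : s ∈ Icc (0:ℝ) Tb) (v : Fin n → ℝ) {t : ℝ}
    (ht : t ∈ Icc s Tb) : ‖Φ t s *ᵥ v‖ ≤ ‖v‖ * Real.exp (n * Ca * Tb) := by
  have hK : (0:ℝ) ≤ n * Ca := by positivity
  have h := norm_sol_le (K := n * Ca) hK (a := s) (b := Tb)
    (f := fun t => Φ t s *ᵥ v) (f' := fun t => At t *ᵥ (Φ t s *ᵥ v))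
    (fun t ht => vec_deriv hΦ hs v ht)
    (fun t ht => At_mulVec_norm_le hCa0 hCa ⟨le_trans hs.1 ht.1, ht.2⟩ _) t ht
  rw [hΦ0 s hs, Matrix.one_mulVec] at h
  refine h.trans (mul_le_mul_of_nonneg_left ?_ (norm_nonneg v))
  exact Real.exp_le_exp.2 (mul_le_mul_of_nonneg_left (by linarith [hs.1, ht.2]) hK)

include hTb hCa0 hCa hΦ0 hΦ in
lemma cocycle_vec {s r : ℝ} (hs : s ∈ Icc (0:ℝ) Tb) (hr : r ∈ Icc s Tb) (v : Fin n → ℝ)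
    {t : ℝ} (ht : t ∈ Icc r Tb) : Φ t s *ᵥ v = Φ t r *ᵥ (Φ r s *ᵥ v) := by
  have hr0 : r ∈ Icc (0:ℝ) Tb := ⟨le_trans hs.1 hr.1, hr.2⟩
  set f : ℝ → Fin n → ℝ := fun t => Φ t s *ᵥ v - Φ t r *ᵥ (Φ r s *ᵥ v) with hf
  have hsub : Icc r Tb ⊆ Icc s Tb := Icc_subset_Icc hr.1 le_rfl
  have hd : ∀ t ∈ Icc r Tb, HasDerivWithinAt f (At t *ᵥ f t) (Icc r Tb) t := by
    intro t ht
    have h1 := ((vec_deriv hΦ hs v (hsub ht)).mono hsub).sub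
      (vec_deriv hΦ hr0 (Φ r s *ᵥ v) ht)
    rwa [← Matrix.mulVec_sub] at h1
  have hnorm := norm_sol_le (K := n * Ca) (by positivity) (a := r) (b := Tb) hd
    (fun t ht => At_mulVec_norm_le hCa0 hCa ⟨le_trans hr0.1 ht.1, ht.2⟩ _) t ht
  have hfr : f r = 0 := by
    rw [hf]; simp only [hΦ0 r hr0, Matrix.one_mulVec, sub_self]
  rw [hfr, norm_zero, zero_mul] at hnorm
  have : f t = 0 := norm_le_zero_iff.1 hnorm
  rwa [hf, sub_eq_zero] at this

include hTb hCa0 hCa hΦ0 hΦ in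
lemma lip_t {s : ℝ} (hs : s ∈ Icc (0:ℝ) Tb) (v : Fin n → ℝ) {t t' : ℝ}
    (ht : t ∈ Icc s Tb) (ht' : t' ∈ Icc s Tb) :
    ‖Φ t s *ᵥ v - Φ t' s *ᵥ v‖ ≤
      ((n * Ca) * Real.exp (n * Ca * Tb) * ‖v‖) * |t - t'| := by
  have := Convex.norm_image_sub_le_of_norm_hasDerivWithin_le
    (f := fun t => Φ t s *ᵥ v) (f' := fun t => At t *ᵥ (Φ t s *ᵥ v))
    (C := (n * Ca) * Real.exp (n * Ca * Tb) * ‖v‖) (s := Icc s Tb)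
    (fun x hx => vec_deriv hΦ hs v hx)
    (fun x hx => by
      refine (At_mulVec_norm_le hCa0 hCa ⟨le_trans hs.1 hx.1, hx.2⟩ _).trans ?_
      have hb := sol_bound hTb hCa0 hCa hΦ0 hΦ hs v hx
      have hK : (0:ℝ) ≤ (n:ℝ) * Ca := by positivity
      nlinarith [mul_nonneg hK (sub_nonneg.2 hb)])
    (convex_Icc s Tb) ht' ht
  rwa [Real.norm_eq_abs] at this
end ODE2

def tri (Tb : ℝ) : Set (ℝ × ℝ) := {p | p.2 ∈ Icc (0:ℝ) Tb ∧ p.1 ∈ Icc p.2 Tb}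

section ODE3
variable {n : ℕ} {Tb Ca : ℝ} {At : ℝ → Matrix (Fin n) (Fin n) ℝ}
  {Φ : ℝ → ℝ → Matrix (Fin n) (Fin n) ℝ}

variable (hTb : 0 < Tb) (hCa0 : 0 ≤ Ca)
  (hCa : ∀ τ ∈ Icc (0:ℝ) Tb, ∀ i j, |At τ i j| ≤ Ca)
  (hΦ0 : ∀ s ∈ Set.Icc (0 : ℝ) Tb, Φ s s = 1)
  (hΦ : ∀ s ∈ Set.Icc (0 : ℝ) Tb, ∀ τ ∈ Set.Icc s Tb, ∀ i j,
      HasDerivWithinAt (fun u => Φ u s i j) ((At τ * Φ τ s) i j) (Set.Icc s Tb) τ)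

include hTb hCa0 hCa hΦ0 hΦ in
lemma joint_lip_ord (v : Fin n → ℝ) {p q : ℝ × ℝ} (hp : p ∈ tri Tb) (hq : q ∈ tri Tb)
    (hpq : q.2 ≤ p.2) :
    ‖Φ p.1 p.2 *ᵥ v - Φ q.1 q.2 *ᵥ v‖ ≤
      ((n*Ca) * Real.exp (n*Ca*Tb) * Real.exp (n*Ca*Tb) * ‖v‖) * (|p.1 - q.1| + |p.2 - q.2|) := by
  obtain ⟨hs', ht'⟩ := hp
  obtain ⟨hs, ht⟩ := hq
  set K : ℝ := n * Ca with hKdef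
  have hK : (0:ℝ) ≤ K := by positivity
  set K0 : ℝ := Real.exp (n*Ca*Tb) with hK0def
  have hK01 : 1 ≤ K0 := Real.one_le_exp (by positivity)
  -- second piece
  have h2 : ‖Φ p.1 q.2 *ᵥ v - Φ q.1 q.2 *ᵥ v‖ ≤ (K * K0 * ‖v‖) * |p.1 - q.1| :=
    lip_t hTb hCa0 hCa hΦ0 hΦ hs v ⟨le_trans hpq ht'.1, ht'.2⟩ ht
  -- first piece
  have hcoc : Φ p.1 q.2 *ᵥ v = Φ p.1 p.2 *ᵥ (Φ p.2 q.2 *ᵥ v) :=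
    cocycle_vec hTb hCa0 hCa hΦ0 hΦ hs ⟨hpq, hs'.2⟩ v ht'
  have h1 : ‖Φ p.1 p.2 *ᵥ v - Φ p.1 q.2 *ᵥ v‖ ≤ K0 * ((K * K0 * ‖v‖) * |p.2 - q.2|) := by
    rw [hcoc, ← Matrix.mulVec_sub]
    have hb := sol_bound hTb hCa0 hCa hΦ0 hΦ hs' (v - Φ p.2 q.2 *ᵥ v) ht'
    refine hb.trans ?_
    rw [mul_comm]
    refine mul_le_mul_of_nonneg_left ?_ (le_of_lt (Real.exp_pos _))
    have : v - Φ p.2 q.2 *ᵥ v = Φ q.2 q.2 *ᵥ v - Φ p.2 q.2 *ᵥ v := by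
      rw [hΦ0 q.2 hs, Matrix.one_mulVec]
    rw [this]
    have := lip_t hTb hCa0 hCa hΦ0 hΦ hs v (t := q.2) (t' := p.2)
      ⟨le_rfl, le_trans hpq hs'.2⟩ ⟨hpq, hs'.2⟩
    rwa [abs_sub_comm] at this
  have key : ‖Φ p.1 p.2 *ᵥ v - Φ q.1 q.2 *ᵥ v‖ ≤
      ‖Φ p.1 p.2 *ᵥ v - Φ p.1 q.2 *ᵥ v‖ + ‖Φ p.1 q.2 *ᵥ v - Φ q.1 q.2 *ᵥ v‖ :=
    norm_sub_le_norm_sub_add_norm_sub _ _ _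
  have hv : (0:ℝ) ≤ ‖v‖ := norm_nonneg v
  have ha1 : (0:ℝ) ≤ |p.1 - q.1| := abs_nonneg _
  have ha2 : (0:ℝ) ≤ |p.2 - q.2| := abs_nonneg _
  have hKK : (0:ℝ) ≤ K * K0 * ‖v‖ := by positivity
  nlinarith [mul_nonneg (mul_nonneg hKK ha1) (sub_nonneg.2 hK01),
    mul_nonneg hKK ha2]

include hTb hCa0 hCa hΦ0 hΦ in
lemma joint_lip (v : Fin n → ℝ) {p q : ℝ × ℝ} (hp : p ∈ tri Tb) (hq : q ∈ tri Tb) :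
    ‖Φ p.1 p.2 *ᵥ v - Φ q.1 q.2 *ᵥ v‖ ≤
      ((n*Ca) * Real.exp (n*Ca*Tb) * Real.exp (n*Ca*Tb) * ‖v‖) * (|p.1 - q.1| + |p.2 - q.2|) := by
  rcases le_total q.2 p.2 with h | h
  · exact joint_lip_ord hTb hCa0 hCa hΦ0 hΦ v hp hq h
  · have := joint_lip_ord hTb hCa0 hCa hΦ0 hΦ v hq hp h
    rwa [norm_sub_rev, abs_sub_comm (q.1) (p.1), abs_sub_comm (q.2) (p.2)] at this

include hTb hCa0 hCa hΦ0 hΦ in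
lemma entry_contOn (i j : Fin n) :
    ContinuousOn (fun p : ℝ × ℝ => Φ p.1 p.2 i j) (tri Tb) := by
  set C2 : ℝ := (n*Ca) * Real.exp (n*Ca*Tb) * Real.exp (n*Ca*Tb) with hC2
  have hC20 : 0 ≤ C2 := by positivity
  have hsingle : ‖(Pi.single j 1 : Fin n → ℝ)‖ ≤ 1 := by
    rw [pi_norm_le_iff_of_nonneg zero_le_one]
    intro k
    rcases eq_or_ne k j with h | h <;> simp [h, Pi.single_apply]
  have key : ∀ p ∈ tri Tb, ∀ q ∈ tri Tb,
      |Φ p.1 p.2 i j - Φ q.1 q.2 i j| ≤ C2 * (|p.1 - q.1| + |p.2 - q.2|) := by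
    intro p hp q hq
    have hv := joint_lip hTb hCa0 hCa hΦ0 hΦ (Pi.single j 1) hp hq
    have hentry : ∀ t s, (Φ t s *ᵥ Pi.single j 1) i = Φ t s i j := by
      intro t s; rw [Matrix.mulVec_single]; simp
    have h1 : |Φ p.1 p.2 i j - Φ q.1 q.2 i j| ≤
        ‖Φ p.1 p.2 *ᵥ Pi.single j 1 - Φ q.1 q.2 *ᵥ Pi.single j 1‖ := by
      have := norm_le_pi_norm (Φ p.1 p.2 *ᵥ Pi.single j 1 - Φ q.1 q.2 *ᵥ Pi.single j 1) i
      rwa [Pi.sub_apply, hentry p.1 p.2, hentry q.1 q.2, Real.norm_eq_abs] at this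
    refine (h1.trans hv).trans ?_
    have habs : (0:ℝ) ≤ |p.1 - q.1| + |p.2 - q.2| := by positivity
    rw [hC2]
    have hE0 : (0:ℝ) ≤ ↑n * Ca * Real.exp (↑n * Ca * Tb) * Real.exp (↑n * Ca * Tb) := by
      positivity
    exact mul_le_mul_of_nonneg_right (mul_le_of_le_one_right hE0 hsingle) habs
  -- Lipschitz implies continuous
  apply LipschitzOnWith.continuousOn (K := Real.toNNReal (2*C2))
  apply LipschitzOnWith.of_dist_le_mul
  intro p hp q hq
  rw [Real.dist_eq]
  refine (key p hp q hq).trans ?_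
  have h1 : |p.1 - q.1| ≤ dist p q := by
    rw [Prod.dist_eq, ← Real.dist_eq]; exact le_max_left _ _
  have h2 : |p.2 - q.2| ≤ dist p q := by
    rw [Prod.dist_eq, ← Real.dist_eq]; exact le_max_right _ _
  have : (Real.toNNReal (2*C2) : ℝ) = 2 * C2 := Real.coe_toNNReal _ (by positivity)
  rw [this]
  nlinarith [dist_nonneg (x := p) (y := q)]

include hTb hCa0 hCa hΦ0 hΦ in
lemma integrand_contOn {c : ℝ → Fin n → ℝ} (hc : ContinuousOn c (Icc (0:ℝ) Tb)) :
    ContinuousOn (fun p : ℝ × ℝ => Φ p.1 p.2 *ᵥ c p.2) (tri Tb) := by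
  rw [continuousOn_pi]
  intro i
  have : ∀ p : ℝ × ℝ, (Φ p.1 p.2 *ᵥ c p.2) i = ∑ j, Φ p.1 p.2 i j * c p.2 j := by
    intro p; simp [Matrix.mulVec, dotProduct]
  simp only [this]
  apply continuousOn_finset_sum
  intro j _
  apply ContinuousOn.mul (entry_contOn hTb hCa0 hCa hΦ0 hΦ i j)
  have hmap : MapsTo (fun p : ℝ × ℝ => p.2) (tri Tb) (Icc (0:ℝ) Tb) := fun p hp => hp.1
  exact ((continuous_apply j).comp_continuousOn hc).comp
    continuous_snd.continuousOn hmap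

end ODE3

lemma fubini_triangle {t : ℝ} (ht : 0 ≤ t) (h : ℝ × ℝ → ℝ)
    (hcont : ContinuousOn h {p : ℝ × ℝ | 0 ≤ p.2 ∧ p.2 ≤ p.1 ∧ p.1 ≤ t}) :
    ∫ s in (0:ℝ)..t, (∫ u in s..t, h (u, s)) = ∫ u in (0:ℝ)..t, (∫ s in (0:ℝ)..u, h (u, s)) := by
  set T : Set (ℝ × ℝ) := {p : ℝ × ℝ | 0 ≤ p.2 ∧ p.2 ≤ p.1 ∧ p.1 ≤ t} with hT
  have hclosed : IsClosed T := by
    apply IsClosed.inter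
    · exact isClosed_le continuous_const continuous_snd
    apply IsClosed.inter
    · exact isClosed_le continuous_snd continuous_fst
    · exact isClosed_le continuous_fst continuous_const
  have hsub : T ⊆ Set.Icc ((0:ℝ), (0:ℝ)) (t, t) := by
    rintro ⟨u, s⟩ ⟨h1, h2, h3⟩
    exact ⟨⟨le_trans h1 h2, h1⟩, ⟨h3, le_trans h2 h3⟩⟩
  have hcomp : IsCompact T := IsCompact.of_isClosed_subset isCompact_Icc hclosed hsub
  have hmeas : MeasurableSet T := hclosed.measurableSet
  have hIntOn : IntegrableOn h T (volume : Measure (ℝ × ℝ)) :=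
    hcont.integrableOn_compact hcomp
  have hInd : Integrable (T.indicator h) (volume : Measure (ℝ × ℝ)) :=
    (integrable_indicator_iff hmeas).2 hIntOn
  have hIndProd : Integrable (Function.uncurry fun u s => T.indicator h (u, s))
      ((volume : Measure ℝ).prod (volume : Measure ℝ)) := by
    have : (volume : Measure (ℝ × ℝ)) = (volume : Measure ℝ).prod volume :=
      MeasureTheory.Measure.volume_eq_prod _ _
    rw [← this]
    exact hInd
  have swap := MeasureTheory.integral_integral_swap
      (f := fun u s => T.indicator h (u, s)) hIndProd
  -- compute inner integrals
  have compL : ∀ u : ℝ, (∫ s : ℝ, T.indicator h (u, s)) =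
      (Icc (0:ℝ) t).indicator (fun u => ∫ s in (0:ℝ)..u, h (u, s)) u := by
    intro u
    by_cases hu : u ∈ Icc (0:ℝ) t
    · rw [indicator_of_mem hu]
      have : (fun s : ℝ => T.indicator h (u, s)) =
          (Icc (0:ℝ) u).indicator (fun s => h (u, s)) := by
        funext s
        by_cases hs : s ∈ Icc (0:ℝ) u
        · rw [indicator_of_mem hs, indicator_of_mem]
          exact ⟨hs.1, hs.2, hu.2⟩
        · rw [indicator_of_notMem hs, indicator_of_notMem]
          intro hmem
          exact hs ⟨hmem.1, hmem.2.1⟩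
      rw [this, MeasureTheory.integral_indicator measurableSet_Icc,
        MeasureTheory.integral_Icc_eq_integral_Ioc, ← intervalIntegral.integral_of_le hu.1]
    · rw [indicator_of_notMem hu]
      have : (fun s : ℝ => T.indicator h (u, s)) = fun _ => 0 := by
        funext s
        rw [indicator_of_notMem]
        intro hmem
        rcases hmem with ⟨h1, h2, h3⟩
        exact hu ⟨le_trans h1 h2, h3⟩
      rw [this]
      simp
  have compR : ∀ s : ℝ, (∫ u : ℝ, T.indicator h (u, s)) =
      (Icc (0:ℝ) t).indicator (fun s => ∫ u in s..t, h (u, s)) s := by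
    intro s
    by_cases hs : s ∈ Icc (0:ℝ) t
    · rw [indicator_of_mem hs]
      have : (fun u : ℝ => T.indicator h (u, s)) =
          (Icc s t).indicator (fun u => h (u, s)) := by
        funext u
        by_cases hu : u ∈ Icc s t
        · rw [indicator_of_mem hu, indicator_of_mem]
          exact ⟨hs.1, hu.1, hu.2⟩
        · rw [indicator_of_notMem hu, indicator_of_notMem]
          intro hmem
          exact hu ⟨hmem.2.1, hmem.2.2⟩
      rw [this, MeasureTheory.integral_indicator measurableSet_Icc,
        MeasureTheory.integral_Icc_eq_integral_Ioc, ← intervalIntegral.integral_of_le hs.2]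
    · rw [indicator_of_notMem hs]
      have : (fun u : ℝ => T.indicator h (u, s)) = fun _ => 0 := by
        funext u
        rw [indicator_of_notMem]
        intro hmem
        exact hs ⟨hmem.1, le_trans hmem.2.1 hmem.2.2⟩
      rw [this]
      simp
  -- put it together
  have lhs_eq : (∫ u : ℝ, ∫ s : ℝ, T.indicator h (u, s)) =
      ∫ u in (0:ℝ)..t, (∫ s in (0:ℝ)..u, h (u, s)) := by
    simp_rw [compL]
    rw [MeasureTheory.integral_indicator measurableSet_Icc,
      MeasureTheory.integral_Icc_eq_integral_Ioc, ← intervalIntegral.integral_of_le ht]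
  have rhs_eq : (∫ s : ℝ, ∫ u : ℝ, T.indicator h (u, s)) =
      ∫ s in (0:ℝ)..t, (∫ u in s..t, h (u, s)) := by
    simp_rw [compR]
    rw [MeasureTheory.integral_indicator measurableSet_Icc,
      MeasureTheory.integral_Icc_eq_integral_Ioc, ← intervalIntegral.integral_of_le ht]
  rw [← lhs_eq, ← rhs_eq, swap]

lemma intervalIntegral_pi_apply {n : ℕ} {f : ℝ → Fin n → ℝ} {a b : ℝ}
    (hf : IntervalIntegrable f volume a b) (i : Fin n) :
    (∫ s in a..b, f s) i = ∫ s in a..b, f s i := by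
  have := (ContinuousLinearMap.proj (R := ℝ)
    (φ := fun _ : Fin n => ℝ) i).intervalIntegral_comp_comm hf
  simpa using this.symm

section ODE4
variable {n : ℕ} {Tb Ca C0 : ℝ} {At : ℝ → Matrix (Fin n) (Fin n) ℝ}
  {Φ : ℝ → ℝ → Matrix (Fin n) (Fin n) ℝ} {c : ℝ → Fin n → ℝ}

variable (hTb : 0 < Tb) (hCa0 : 0 ≤ Ca)
  (hCa : ∀ τ ∈ Icc (0:ℝ) Tb, ∀ i j, |At τ i j| ≤ Ca)
  (hAc : ∀ i j, ContinuousOn (fun τ => At τ i j) (Icc (0:ℝ) Tb))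
  (hΦ0 : ∀ s ∈ Set.Icc (0 : ℝ) Tb, Φ s s = 1)
  (hΦ : ∀ s ∈ Set.Icc (0 : ℝ) Tb, ∀ τ ∈ Set.Icc s Tb, ∀ i j,
      HasDerivWithinAt (fun u => Φ u s i j) ((At τ * Φ τ s) i j) (Set.Icc s Tb) τ)
  (hc : ContinuousOn c (Icc (0:ℝ) Tb))

include hTb hCa0 hCa hΦ0 hΦ hc in
lemma slice_contOn {t : ℝ} (ht : t ∈ Icc (0:ℝ) Tb) :
    ContinuousOn (fun s => Φ t s *ᵥ c s) (Icc (0:ℝ) t) := by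
  have hmap : MapsTo (fun s : ℝ => ((t, s) : ℝ × ℝ)) (Icc (0:ℝ) t) (tri Tb) :=
    fun s hs => ⟨⟨hs.1, le_trans hs.2 ht.2⟩, ⟨hs.2, ht.2⟩⟩
  exact (integrand_contOn hTb hCa0 hCa hΦ0 hΦ hc).comp
    (continuous_const.prodMk continuous_id).continuousOn hmap

include hTb hCa0 hCa hΦ0 hΦ hc in
lemma slice_integrable {t : ℝ} (ht : t ∈ Icc (0:ℝ) Tb) {a b : ℝ} (ha : 0 ≤ a)
    (hab : a ≤ b) (hb : b ≤ t) :
    IntervalIntegrable (fun s => Φ t s *ᵥ c s) volume a b :=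
  ((slice_contOn hTb hCa0 hCa hΦ0 hΦ hc ht).mono
    (Icc_subset_Icc ha hb)).intervalIntegrable_of_Icc hab

include hTb hCa0 hCa hΦ0 hΦ hc in
lemma F_lip (hC00 : 0 ≤ C0) (hcb : ∀ s ∈ Icc (0:ℝ) Tb, ‖c s‖ ≤ C0)
    {t t' : ℝ} (ht : t ∈ Icc (0:ℝ) Tb) (ht' : t' ∈ Icc (0:ℝ) Tb) (htt : t ≤ t') :
    ‖(∫ s in (0:ℝ)..t', Φ t' s *ᵥ c s) - ∫ s in (0:ℝ)..t, Φ t s *ᵥ c s‖ ≤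
      (((n*Ca) * Real.exp (n*Ca*Tb) * Real.exp (n*Ca*Tb)) * C0 * Tb +
        C0 * Real.exp (n*Ca*Tb)) * (t' - t) := by
  set K0 : ℝ := Real.exp (n*Ca*Tb) with hK0
  set C2 : ℝ := (n*Ca) * K0 * K0 with hC2
  have hC20 : 0 ≤ C2 := by positivity
  have hK00 : 0 ≤ K0 := le_of_lt (Real.exp_pos _)
  have i1 : IntervalIntegrable (fun s => Φ t' s *ᵥ c s) volume 0 t :=
    slice_integrable hTb hCa0 hCa hΦ0 hΦ hc ht' le_rfl ht.1 htt
  have i2 : IntervalIntegrable (fun s => Φ t' s *ᵥ c s) volume t t' :=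
    slice_integrable hTb hCa0 hCa hΦ0 hΦ hc ht' ht.1 htt le_rfl
  have i3 : IntervalIntegrable (fun s => Φ t s *ᵥ c s) volume 0 t :=
    slice_integrable hTb hCa0 hCa hΦ0 hΦ hc ht le_rfl ht.1 le_rfl
  have split : (∫ s in (0:ℝ)..t', Φ t' s *ᵥ c s) =
      (∫ s in (0:ℝ)..t, Φ t' s *ᵥ c s) + ∫ s in t..t', Φ t' s *ᵥ c s :=
    (intervalIntegral.integral_add_adjacent_intervals i1 i2).symm
  have hdiff : (∫ s in (0:ℝ)..t, Φ t' s *ᵥ c s) - (∫ s in (0:ℝ)..t, Φ t s *ᵥ c s) =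
      ∫ s in (0:ℝ)..t, (Φ t' s *ᵥ c s - Φ t s *ᵥ c s) :=
    (intervalIntegral.integral_sub i1 i3).symm
  have b1 : ‖∫ s in (0:ℝ)..t, (Φ t' s *ᵥ c s - Φ t s *ᵥ c s)‖ ≤ (C2 * C0 * (t' - t)) * |t - 0| := by
    apply intervalIntegral.norm_integral_le_of_norm_le_const
    intro s hs
    rw [uIoc_of_le ht.1] at hs
    have hs' : s ∈ Icc (0:ℝ) t := ⟨le_of_lt hs.1, hs.2⟩
    have hp : ((t', s) : ℝ × ℝ) ∈ tri Tb :=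
      ⟨⟨hs'.1, le_trans hs'.2 (le_trans htt ht'.2)⟩, ⟨le_trans hs'.2 htt, ht'.2⟩⟩
    have hq : ((t, s) : ℝ × ℝ) ∈ tri Tb := ⟨⟨hs'.1, le_trans hs'.2 ht.2⟩, ⟨hs'.2, ht.2⟩⟩
    have := joint_lip hTb hCa0 hCa hΦ0 hΦ (c s) hp hq
    simp only [sub_self, abs_zero, add_zero] at this
    refine this.trans ?_
    have hcs : ‖c s‖ ≤ C0 := hcb s ⟨hs'.1, le_trans hs'.2 ht.2⟩
    have habs : |t' - t| = t' - t := abs_of_nonneg (by linarith)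
    rw [habs, ← hK0, ← hC2]
    exact mul_le_mul_of_nonneg_right (mul_le_mul_of_nonneg_left hcs hC20)
      (sub_nonneg.2 htt)
  have b2 : ‖∫ s in t..t', Φ t' s *ᵥ c s‖ ≤ (C0 * K0) * |t' - t| := by
    apply intervalIntegral.norm_integral_le_of_norm_le_const
    intro s hs
    rw [uIoc_of_le htt] at hs
    have hs0 : s ∈ Icc (0:ℝ) Tb := ⟨le_trans ht.1 (le_of_lt hs.1), le_trans hs.2 ht'.2⟩
    have := sol_bound hTb hCa0 hCa hΦ0 hΦ hs0 (c s) (t := t') ⟨hs.2, ht'.2⟩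
    refine this.trans ?_
    exact mul_le_mul_of_nonneg_right (hcb s hs0) hK00
  calc ‖(∫ s in (0:ℝ)..t', Φ t' s *ᵥ c s) - ∫ s in (0:ℝ)..t, Φ t s *ᵥ c s‖
      = ‖(∫ s in (0:ℝ)..t, (Φ t' s *ᵥ c s - Φ t s *ᵥ c s)) + ∫ s in t..t', Φ t' s *ᵥ c s‖ := by
        rw [split, ← hdiff]; ring_nf
  _ ≤ ‖∫ s in (0:ℝ)..t, (Φ t' s *ᵥ c s - Φ t s *ᵥ c s)‖ + ‖∫ s in t..t', Φ t' s *ᵥ c s‖ :=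
        norm_add_le _ _
  _ ≤ (C2 * C0 * (t' - t)) * |t - 0| + (C0 * K0) * |t' - t| := add_le_add b1 b2
  _ ≤ (C2 * C0 * Tb + C0 * K0) * (t' - t) := by
        rw [sub_zero, abs_of_nonneg ht.1, abs_of_nonneg (by linarith : (0:ℝ) ≤ t' - t)]
        nlinarith [mul_nonneg (mul_nonneg hC20 hC00) (sub_nonneg.2 htt), ht.2,
          mul_nonneg hC00 hK00]
  _ = (((n*Ca) * Real.exp (n*Ca*Tb) * Real.exp (n*Ca*Tb)) * C0 * Tb +
        C0 * Real.exp (n*Ca*Tb)) * (t' - t) := by rw [hC2, hK0]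

include hTb hCa0 hCa hΦ0 hΦ hc in
lemma F_contOn (hC00 : 0 ≤ C0) (hcb : ∀ s ∈ Icc (0:ℝ) Tb, ‖c s‖ ≤ C0) :
    ContinuousOn (fun t => ∫ s in (0:ℝ)..t, Φ t s *ᵥ c s) (Icc (0:ℝ) Tb) := by
  set CF : ℝ := (((n*Ca) * Real.exp (n*Ca*Tb) * Real.exp (n*Ca*Tb)) * C0 * Tb +
        C0 * Real.exp (n*Ca*Tb)) with hCF
  have hCF0 : 0 ≤ CF := by positivity
  rw [Metric.continuousOn_iff]
  intro b hb ε hε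
  refine ⟨ε / (CF + 1), by positivity, ?_⟩
  intro a ha hab
  have key : ∀ u ∈ Icc (0:ℝ) Tb, ∀ v ∈ Icc (0:ℝ) Tb,
      dist (∫ s in (0:ℝ)..u, Φ u s *ᵥ c s) (∫ s in (0:ℝ)..v, Φ v s *ᵥ c s) ≤ CF * |u - v| := by
    intro u hu v hv
    rcases le_total v u with h | h
    · rw [dist_eq_norm, abs_of_nonneg (by linarith)]
      exact F_lip hTb hCa0 hCa hΦ0 hΦ hc hC00 hcb hv hu h
    · rw [dist_comm, dist_eq_norm, abs_of_nonpos (by linarith), neg_sub]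
      exact F_lip hTb hCa0 hCa hΦ0 hΦ hc hC00 hcb hu hv h
  refine lt_of_le_of_lt (key a ha b hb) ?_
  have : |a - b| < ε / (CF + 1) := by rwa [← Real.dist_eq]
  calc CF * |a - b| ≤ CF * (ε / (CF + 1)) :=
        mul_le_mul_of_nonneg_left (le_of_lt this) hCF0
  _ < ε := by
        rw [div_eq_inv_mul, ← mul_assoc]
        have h1 : CF * (CF + 1)⁻¹ < 1 := by
          rw [mul_inv_lt_iff₀ (by linarith)]; linarith
        nlinarith
end ODE4

section ODE5
variable {n : ℕ} {Tb Ca C0 : ℝ} {At : ℝ → Matrix (Fin n) (Fin n) ℝ}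
  {Φ : ℝ → ℝ → Matrix (Fin n) (Fin n) ℝ} {c : ℝ → Fin n → ℝ}

variable (hTb : 0 < Tb) (hCa0 : 0 ≤ Ca)
  (hCa : ∀ τ ∈ Icc (0:ℝ) Tb, ∀ i j, |At τ i j| ≤ Ca)
  (hAc : ∀ i j, ContinuousOn (fun τ => At τ i j) (Icc (0:ℝ) Tb))
  (hΦ0 : ∀ s ∈ Set.Icc (0 : ℝ) Tb, Φ s s = 1)
  (hΦ : ∀ s ∈ Set.Icc (0 : ℝ) Tb, ∀ τ ∈ Set.Icc s Tb, ∀ i j,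
      HasDerivWithinAt (fun u => Φ u s i j) ((At τ * Φ τ s) i j) (Set.Icc s Tb) τ)
  (hc : ContinuousOn c (Icc (0:ℝ) Tb))

include hTb hCa0 hCa hΦ0 hΦ hc in
lemma entry_ftc {t : ℝ} (ht : t ∈ Icc (0:ℝ) Tb) {s : ℝ} (hs : s ∈ Icc (0:ℝ) t) (i : Fin n)
    (hAc : ∀ i j, ContinuousOn (fun τ => At τ i j) (Icc (0:ℝ) Tb)) :
    (Φ t s *ᵥ c s) i = c s i + ∫ u in s..t, (At u *ᵥ (Φ u s *ᵥ c s)) i := by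
  have hs0 : s ∈ Icc (0:ℝ) Tb := ⟨hs.1, le_trans hs.2 ht.2⟩
  have hvec : ∀ τ ∈ Icc s Tb, HasDerivWithinAt (fun u => Φ u s *ᵥ c s)
      (At τ *ᵥ (Φ τ s *ᵥ c s)) (Icc s Tb) τ := fun τ hτ => vec_deriv hΦ hs0 (c s) hτ
  have hcv : ContinuousOn (fun u => Φ u s *ᵥ c s) (Icc s Tb) :=
    fun u hu => (hvec u hu).continuousWithinAt
  have hcont : ContinuousOn (fun u => (Φ u s *ᵥ c s) i) (Icc s t) :=
    ((continuous_apply i).comp_continuousOn hcv).mono (Icc_subset_Icc le_rfl ht.2)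
  have hderiv : ∀ x ∈ Ioo s t, HasDerivWithinAt (fun u => (Φ u s *ᵥ c s) i)
      ((At x *ᵥ (Φ x s *ᵥ c s)) i) (Ioi x) x := by
    intro x hx
    have hxm : x ∈ Icc s Tb := ⟨le_of_lt hx.1, le_trans (le_of_lt hx.2) ht.2⟩
    refine ((hasDerivWithinAt_pi.1 (hvec x hxm)) i).mono_of_mem_nhdsWithin ?_
    refine mem_nhdsWithin.2 ⟨Iio Tb, isOpen_Iio, lt_of_lt_of_le hx.2 ht.2, ?_⟩
    rintro y ⟨hy1, hy2⟩
    exact ⟨le_of_lt (lt_of_le_of_lt hxm.1 hy2), le_of_lt hy1⟩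
  have hint : IntervalIntegrable (fun u => (At u *ᵥ (Φ u s *ᵥ c s)) i) volume s t := by
    apply ContinuousOn.intervalIntegrable_of_Icc hs.2
    have heq : (fun u => (At u *ᵥ (Φ u s *ᵥ c s)) i) =
        fun u => ∑ j, At u i j * (Φ u s *ᵥ c s) j := by
      funext u; simp [Matrix.mulVec, dotProduct]
    rw [heq]
    apply continuousOn_finset_sum
    intro j _
    exact ((hAc i j).mono (Icc_subset_Icc hs.1 ht.2)).mul
      (((continuous_apply j).comp_continuousOn hcv).mono (Icc_subset_Icc le_rfl ht.2))
  have key := intervalIntegral.integral_eq_sub_of_hasDeriv_right_of_le hs.2 hcont hderiv hint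
  have hfs : (Φ s s *ᵥ c s) i = c s i := by rw [hΦ0 s hs0, Matrix.one_mulVec]
  rw [key, hfs]
  ring

include hTb hCa0 hCa hAc hΦ0 hΦ hc in
lemma F_eq (hC00 : 0 ≤ C0) (hcb : ∀ s ∈ Icc (0:ℝ) Tb, ‖c s‖ ≤ C0) {t : ℝ}
    (ht : t ∈ Icc (0:ℝ) Tb) :
    (∫ s in (0:ℝ)..t, Φ t s *ᵥ c s) =
      ∫ s in (0:ℝ)..t, (c s + At s *ᵥ (∫ r in (0:ℝ)..s, Φ s r *ᵥ c r)) := by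
  set F : ℝ → Fin n → ℝ := (fun t => ∫ s in (0:ℝ)..t, Φ t s *ᵥ c s) with hFdef
  have hFc : ContinuousOn F (Icc (0:ℝ) Tb) := F_contOn hTb hCa0 hCa hΦ0 hΦ hc hC00 hcb
  have hAF : ContinuousOn (fun s => At s *ᵥ F s) (Icc (0:ℝ) Tb) := by
    rw [continuousOn_pi]
    intro i
    have heq : (fun s => (At s *ᵥ F s) i) = fun s => ∑ j, At s i j * F s j := by
      funext s; simp [Matrix.mulVec, dotProduct]
    rw [heq]
    exact continuousOn_finset_sum _ fun j _ =>
      (hAc i j).mul ((continuous_apply j).comp_continuousOn hFc)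
  have hGc : ContinuousOn (fun s => c s + At s *ᵥ F s) (Icc (0:ℝ) Tb) := hc.add hAF
  have hGint : IntervalIntegrable (fun s => c s + At s *ᵥ F s) volume 0 t :=
    (hGc.mono (Icc_subset_Icc le_rfl ht.2)).intervalIntegrable_of_Icc ht.1
  funext i
  -- inner computation: ∀ u ∈ Icc 0 t, ∫ s in 0..u, h (u,s) = (At u *ᵥ F u) i
  have inner : ∀ u, u ∈ Icc (0:ℝ) t →
      (∫ s in (0:ℝ)..u, (At u *ᵥ (Φ u s *ᵥ c s)) i) = (At u *ᵥ F u) i := by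
    intro u hu
    have hu0 : u ∈ Icc (0:ℝ) Tb := ⟨hu.1, le_trans hu.2 ht.2⟩
    have hslice := slice_contOn hTb hCa0 hCa hΦ0 hΦ hc hu0
    have heq : ∀ s, (At u *ᵥ (Φ u s *ᵥ c s)) i = ∑ j, At u i j * (Φ u s *ᵥ c s) j := by
      intro s; simp [Matrix.mulVec, dotProduct]
    have hintj : ∀ j : Fin n, IntervalIntegrable (fun s => At u i j * (Φ u s *ᵥ c s) j)
        volume 0 u := by
      intro j
      apply ContinuousOn.intervalIntegrable_of_Icc hu.1
      exact continuousOn_const.mul ((continuous_apply j).comp_continuousOn hslice)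
    calc (∫ s in (0:ℝ)..u, (At u *ᵥ (Φ u s *ᵥ c s)) i)
        = ∫ s in (0:ℝ)..u, ∑ j, At u i j * (Φ u s *ᵥ c s) j := by simp_rw [heq]
    _ = ∑ j, ∫ s in (0:ℝ)..u, At u i j * (Φ u s *ᵥ c s) j :=
        intervalIntegral.integral_finset_sum fun j _ => hintj j
    _ = ∑ j, At u i j * ∫ s in (0:ℝ)..u, (Φ u s *ᵥ c s) j := by
        simp_rw [intervalIntegral.integral_const_mul]
    _ = ∑ j, At u i j * F u j := by
        congr 1
        funext j
        congr 1
        exact (intervalIntegral_pi_apply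
          (slice_integrable hTb hCa0 hCa hΦ0 hΦ hc hu0 le_rfl hu.1 le_rfl) j).symm
    _ = (At u *ᵥ F u) i := by simp [Matrix.mulVec, dotProduct]
  -- main chain
  have hq' : ContinuousOn (fun s => (Φ t s *ᵥ c s) i - c s i) (Icc (0:ℝ) t) :=
    ((continuous_apply i).comp_continuousOn (slice_contOn hTb hCa0 hCa hΦ0 hΦ hc ht)).sub
      (((continuous_apply i).comp_continuousOn hc).mono (Icc_subset_Icc le_rfl ht.2))
  have int_q : IntervalIntegrable (fun s => (Φ t s *ᵥ c s) i - c s i) volume 0 t :=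
    hq'.intervalIntegrable_of_Icc ht.1
  have int_c : IntervalIntegrable (fun s => c s i) volume 0 t :=
    (((continuous_apply i).comp_continuousOn hc).mono
      (Icc_subset_Icc le_rfl ht.2)).intervalIntegrable_of_Icc ht.1
  have step1 : F t i = ∫ s in (0:ℝ)..t, (Φ t s *ᵥ c s) i :=
    intervalIntegral_pi_apply (slice_integrable hTb hCa0 hCa hΦ0 hΦ hc ht le_rfl ht.1 le_rfl) i
  have step2 : (∫ s in (0:ℝ)..t, (Φ t s *ᵥ c s) i) =
      (∫ s in (0:ℝ)..t, c s i) + ∫ s in (0:ℝ)..t, ((Φ t s *ᵥ c s) i - c s i) := by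
    rw [← intervalIntegral.integral_add int_c int_q]
    congr 1
    funext s
    ring
  have step3 : (∫ s in (0:ℝ)..t, ((Φ t s *ᵥ c s) i - c s i)) =
      ∫ s in (0:ℝ)..t, (∫ u in s..t, (At u *ᵥ (Φ u s *ᵥ c s)) i) := by
    apply intervalIntegral.integral_congr
    intro s hs
    rw [uIcc_of_le ht.1] at hs
    show (Φ t s *ᵥ c s) i - c s i = ∫ u in s..t, (At u *ᵥ (Φ u s *ᵥ c s)) i
    rw [entry_ftc hTb hCa0 hCa hΦ0 hΦ hc ht hs i hAc]
    ring
  have hTcont : ContinuousOn (fun p : ℝ × ℝ => (At p.1 *ᵥ (Φ p.1 p.2 *ᵥ c p.2)) i)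
      {p : ℝ × ℝ | 0 ≤ p.2 ∧ p.2 ≤ p.1 ∧ p.1 ≤ t} := by
    set Tt : Set (ℝ × ℝ) := {p : ℝ × ℝ | 0 ≤ p.2 ∧ p.2 ≤ p.1 ∧ p.1 ≤ t} with hTt
    have hsubset : Tt ⊆ tri Tb := by
      rintro ⟨u, s⟩ ⟨h1, h2, h3⟩
      exact ⟨⟨h1, le_trans h2 (le_trans h3 ht.2)⟩, ⟨h2, le_trans h3 ht.2⟩⟩
    have heq : (fun p : ℝ × ℝ => (At p.1 *ᵥ (Φ p.1 p.2 *ᵥ c p.2)) i) =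
        fun p : ℝ × ℝ => ∑ j, At p.1 i j * (Φ p.1 p.2 *ᵥ c p.2) j := by
      funext p; simp [Matrix.mulVec, dotProduct]
    rw [heq]
    apply continuousOn_finset_sum
    intro j _
    apply ContinuousOn.mul
    · have hmap : MapsTo (fun p : ℝ × ℝ => p.1) Tt (Icc (0:ℝ) Tb) := by
        rintro ⟨u, s⟩ ⟨h1, h2, h3⟩
        exact ⟨le_trans h1 h2, le_trans h3 ht.2⟩
      exact (hAc i j).comp continuous_fst.continuousOn hmap
    · exact ((continuous_apply j).comp_continuousOn
        (integrand_contOn hTb hCa0 hCa hΦ0 hΦ hc)).mono hsubset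
  have fub := fubini_triangle ht.1 (fun p : ℝ × ℝ => (At p.1 *ᵥ (Φ p.1 p.2 *ᵥ c p.2)) i) hTcont
  have step4 : (∫ u in (0:ℝ)..t, (∫ s in (0:ℝ)..u, (At u *ᵥ (Φ u s *ᵥ c s)) i)) =
      ∫ u in (0:ℝ)..t, (At u *ᵥ F u) i := by
    apply intervalIntegral.integral_congr
    intro u hu
    rw [uIcc_of_le ht.1] at hu
    exact inner u hu
  have int_AF : IntervalIntegrable (fun s => (At s *ᵥ F s) i) volume 0 t :=
    (((continuous_apply i).comp_continuousOn hAF).mono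
      (Icc_subset_Icc le_rfl ht.2)).intervalIntegrable_of_Icc ht.1
  have step5 : (∫ s in (0:ℝ)..t, c s i) + (∫ s in (0:ℝ)..t, (At s *ᵥ F s) i) =
      ∫ s in (0:ℝ)..t, (c s i + (At s *ᵥ F s) i) :=
    (intervalIntegral.integral_add int_c int_AF).symm
  have step6 : (∫ s in (0:ℝ)..t, (c s i + (At s *ᵥ F s) i)) =
      (∫ s in (0:ℝ)..t, (c s + At s *ᵥ F s)) i := by
    rw [intervalIntegral_pi_apply hGint i]
    rfl
  calc F t i = ∫ s in (0:ℝ)..t, (Φ t s *ᵥ c s) i := step1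
  _ = (∫ s in (0:ℝ)..t, c s i) + ∫ s in (0:ℝ)..t, ((Φ t s *ᵥ c s) i - c s i) := step2
  _ = (∫ s in (0:ℝ)..t, c s i) +
      ∫ s in (0:ℝ)..t, (∫ u in s..t, (At u *ᵥ (Φ u s *ᵥ c s)) i) := by rw [step3]
  _ = (∫ s in (0:ℝ)..t, c s i) +
      ∫ u in (0:ℝ)..t, (∫ s in (0:ℝ)..u, (At u *ᵥ (Φ u s *ᵥ c s)) i) := by rw [fub]
  _ = (∫ s in (0:ℝ)..t, c s i) + ∫ u in (0:ℝ)..t, (At u *ᵥ F u) i := by rw [step4]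
  _ = ∫ s in (0:ℝ)..t, (c s i + (At s *ᵥ F s) i) := step5
  _ = (∫ s in (0:ℝ)..t, (c s + At s *ᵥ F s)) i := step6

include hTb hCa0 hCa hAc hΦ0 hΦ hc in
lemma F_hasDeriv (hC00 : 0 ≤ C0) (hcb : ∀ s ∈ Icc (0:ℝ) Tb, ‖c s‖ ≤ C0) {τ : ℝ}
    (hτ : τ ∈ Icc (0:ℝ) Tb) :
    HasDerivWithinAt (fun t => ∫ s in (0:ℝ)..t, Φ t s *ᵥ c s)
      (c τ + At τ *ᵥ (∫ s in (0:ℝ)..τ, Φ τ s *ᵥ c s)) (Icc (0:ℝ) Tb) τ := by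
  set F : ℝ → Fin n → ℝ := (fun t => ∫ s in (0:ℝ)..t, Φ t s *ᵥ c s) with hFdef
  have hFc : ContinuousOn F (Icc (0:ℝ) Tb) := F_contOn hTb hCa0 hCa hΦ0 hΦ hc hC00 hcb
  have hAF : ContinuousOn (fun s => At s *ᵥ F s) (Icc (0:ℝ) Tb) := by
    rw [continuousOn_pi]
    intro i
    have heq : (fun s => (At s *ᵥ F s) i) = fun s => ∑ j, At s i j * F s j := by
      funext s; simp [Matrix.mulVec, dotProduct]
    rw [heq]
    exact continuousOn_finset_sum _ fun j _ =>
      (hAc i j).mul ((continuous_apply j).comp_continuousOn hFc)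
  have hGc0 : ContinuousOn (fun s => c s + At s *ᵥ F s) (Icc (0:ℝ) Tb) := hc.add hAF
  set π : ℝ → ℝ := fun x => max 0 (min x Tb) with hπdef
  have hπcont : Continuous π := continuous_const.max (continuous_id.min continuous_const)
  have hπmem : ∀ x, π x ∈ Icc (0:ℝ) Tb := fun x =>
    ⟨le_max_left _ _, max_le (le_of_lt hTb) (min_le_right _ _)⟩
  have hπid : ∀ x ∈ Icc (0:ℝ) Tb, π x = x := fun x hx => by
    rw [hπdef]; simp only []; rw [min_eq_left hx.2, max_eq_right hx.1]
  set G : ℝ → Fin n → ℝ := fun s => c (π s) + At (π s) *ᵥ F (π s) with hGdef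
  have hGcont : Continuous G := by
    rw [← continuousOn_univ]
    exact hGc0.comp hπcont.continuousOn (fun x _ => hπmem x)
  have hW : HasDerivAt (fun u => ∫ x in (0:ℝ)..u, G x) (G τ) τ :=
    (hGcont.integral_hasStrictDerivAt 0 τ).hasDerivAt
  have hWF : ∀ x ∈ Icc (0:ℝ) Tb, F x = ∫ u in (0:ℝ)..x, G u := by
    intro x hx
    have h1 : (∫ u in (0:ℝ)..x, G u) = ∫ u in (0:ℝ)..x, (c u + At u *ᵥ F u) := by
      apply intervalIntegral.integral_congr
      intro s hsm
      rw [uIcc_of_le hx.1] at hsm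
      have hs0 : s ∈ Icc (0:ℝ) Tb := ⟨hsm.1, le_trans hsm.2 hx.2⟩
      rw [hGdef]
      simp only []
      rw [hπid s hs0]
    rw [h1]
    exact F_eq hTb hCa0 hCa hAc hΦ0 hΦ hc hC00 hcb hx
  have hval : G τ = c τ + At τ *ᵥ F τ := by
    rw [hGdef]; simp only []; rw [hπid τ hτ]
  rw [← hval]
  exact hW.hasDerivWithinAt.congr hWF (hWF τ hτ)

end ODE5

lemma metzler_invariance {n : ℕ} {Tb : ℝ} (hTb : 0 < Tb)
    {At : ℝ → Matrix (Fin n) (Fin n) ℝ}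
    (hAM : ∀ τ ∈ Icc (0:ℝ) Tb, ∀ i j, i ≠ j → 0 ≤ At τ i j)
    {w w' : ℝ → Fin n → ℝ}
    (hd : ∀ τ ∈ Icc (0:ℝ) Tb, HasDerivWithinAt w (w' τ) (Icc (0:ℝ) Tb) τ)
    (hstrict : ∀ τ ∈ Icc (0:ℝ) Tb, ∀ i, (At τ *ᵥ w τ) i < w' τ i)
    (h0 : ∀ i, 0 ≤ w 0 i) :
    ∀ τ ∈ Icc (0:ℝ) Tb, ∀ i, 0 ≤ w τ i := by
  set S : Set ℝ := {t | t ∈ Icc (0:ℝ) Tb ∧ ∀ s ∈ Icc (0:ℝ) t, ∀ i, 0 ≤ w s i} with hS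
  have h0S : (0:ℝ) ∈ S := by
    refine ⟨left_mem_Icc.2 hTb.le, fun s hs i => ?_⟩
    have : s = 0 := le_antisymm hs.2 hs.1
    rw [this]; exact h0 i
  have hbdd : BddAbove S := ⟨Tb, fun t ht => ht.1.2⟩
  have hne : S.Nonempty := ⟨0, h0S⟩
  set t0 : ℝ := sSup S with ht0
  have ht0mem : t0 ∈ Icc (0:ℝ) Tb :=
    ⟨le_csSup hbdd h0S, csSup_le hne fun t ht => ht.1.2⟩
  have hw_lt : ∀ s, 0 ≤ s → s < t0 → ∀ i, 0 ≤ w s i := by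
    intro s hs0 hst i
    obtain ⟨t, htS, hlt⟩ := exists_lt_of_lt_csSup hne hst
    exact htS.2 s ⟨hs0, le_of_lt hlt⟩ i
  have ht0S : ∀ i, 0 ≤ w t0 i := by
    intro i
    rcases eq_or_lt_of_le ht0mem.1 with h | h
    · rw [← h]; exact h0 i
    · have hconti : ContinuousWithinAt (fun s => w s i) (Icc (0:ℝ) Tb) t0 :=
        (continuous_apply i).continuousAt.comp_continuousWithinAt
          (hd t0 ht0mem).continuousWithinAt
      have hsub : Ioo (0:ℝ) t0 ⊆ Icc (0:ℝ) Tb :=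
        fun x hx => ⟨hx.1.le, le_trans hx.2.le ht0mem.2⟩
      have htend : Tendsto (fun s => w s i) (nhdsWithin t0 (Ioo (0:ℝ) t0))
          (nhds (w t0 i)) := hconti.tendsto.mono_left (nhdsWithin_mono t0 hsub)
      have hne2 : (nhdsWithin t0 (Ioo (0:ℝ) t0)).NeBot := right_nhdsWithin_Ioo_neBot h
      refine ge_of_tendsto htend ?_
      filter_upwards [self_mem_nhdsWithin] with s hs
      exact hw_lt s hs.1.le hs.2 i
  have ht0full : ∀ s ∈ Icc (0:ℝ) t0, ∀ i, 0 ≤ w s i := fun s hs i =>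
    (eq_or_lt_of_le hs.2).elim (fun h => h ▸ ht0S i) fun h => hw_lt s hs.1 h i
  rcases eq_or_lt_of_le ht0mem.2 with heq | hlt
  · intro τ hτ
    exact ht0full τ ⟨hτ.1, heq ▸ hτ.2⟩
  · exfalso
    have hsubIoc : Ioc t0 Tb ⊆ Icc (0:ℝ) Tb \ {t0} := fun x hx =>
      ⟨⟨le_trans ht0mem.1 hx.1.le, hx.2⟩, ne_of_gt hx.1⟩
    have hev : ∀ i : Fin n, ∀ᶠ s in nhdsWithin t0 (Ioc t0 Tb), 0 ≤ w s i := by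
      intro i
      rcases lt_or_eq_of_le (ht0S i) with hpos | hzero
      · have hconti : ContinuousWithinAt (fun s => w s i) (Icc (0:ℝ) Tb) t0 :=
          (continuous_apply i).continuousAt.comp_continuousWithinAt
            (hd t0 ht0mem).continuousWithinAt
        have htend : Tendsto (fun s => w s i) (nhdsWithin t0 (Ioc t0 Tb))
            (nhds (w t0 i)) := hconti.tendsto.mono_left (nhdsWithin_mono t0
              fun x hx => ⟨le_trans ht0mem.1 hx.1.le, hx.2⟩)
        filter_upwards [htend.eventually (eventually_gt_nhds hpos)] with s hs using hs.le
      · have hAw : 0 ≤ (At t0 *ᵥ w t0) i := by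
          simp only [Matrix.mulVec, dotProduct]
          apply Finset.sum_nonneg
          intro j _
          rcases eq_or_ne i j with hij | hij
          · rw [← hij, ← hzero, mul_zero]
          · exact mul_nonneg (hAM t0 ht0mem i j hij) (ht0S j)
        have hd0 : 0 < w' t0 i := lt_of_le_of_lt hAw (hstrict t0 ht0mem i)
        have hslope := hasDerivWithinAt_pi.1 (hd t0 ht0mem) i
        rw [hasDerivWithinAt_iff_tendsto_slope] at hslope
        have hevs' : ∀ᶠ s in nhdsWithin t0 (Ioc t0 Tb),
            0 < slope (fun s => w s i) t0 s :=
          (hslope.eventually (eventually_gt_nhds hd0)).filter_mono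
            (nhdsWithin_mono t0 hsubIoc)
        filter_upwards [hevs', self_mem_nhdsWithin] with s hq hmem
        have hst : (0:ℝ) < s - t0 := sub_pos.2 hmem.1
        rw [slope_def_field] at hq
        have h3 : 0 < w s i - w t0 i := by
          have := mul_pos hq hst
          rwa [div_mul_cancel₀ _ (ne_of_gt hst)] at this
        rw [← hzero] at h3
        linarith
    have hall : ∀ᶠ s in nhdsWithin t0 (Ioc t0 Tb), ∀ i, 0 ≤ w s i := eventually_all.2 hev
    rw [eventually_nhdsWithin_iff] at hall
    rw [Metric.eventually_nhds_iff] at hall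
    obtain ⟨δ, hδ, hball⟩ := hall
    set t1 : ℝ := min (t0 + δ/2) Tb with ht1
    have ht01 : t0 < t1 := lt_min (by linarith) hlt
    have ht1mem : t1 ∈ Icc (0:ℝ) Tb := ⟨le_trans ht0mem.1 ht01.le, min_le_right _ _⟩
    have ht1S : t1 ∈ S := by
      refine ⟨ht1mem, fun s hs i => ?_⟩
      rcases le_or_gt s t0 with h | h
      · exact ht0full s ⟨hs.1, h⟩ i
      · have hsIoc : s ∈ Ioc t0 Tb := ⟨h, le_trans hs.2 ht1mem.2⟩
        have hdist : dist s t0 < δ := by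
          rw [Real.dist_eq, abs_of_pos (sub_pos.2 h)]
          have : s ≤ t0 + δ/2 := le_trans hs.2 (min_le_left _ _)
          linarith
        exact hball hdist hsIoc i
    exact absurd (le_csSup hbdd ht1S) (not_le.2 ht01)

lemma exists_margin {m : ℕ} (v : Fin m → ℝ) (h : ∀ i, v i < 0) : ∃ d > 0, ∀ i, v i ≤ -d := by
  by_cases hm : Nonempty (Fin m)
  · haveI := hm
    refine ⟨Finset.univ.inf' Finset.univ_nonempty (fun i => -v i), ?_, ?_⟩
    · rw [gt_iff_lt, Finset.lt_inf'_iff]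
      intro i _
      linarith [h i]
    · intro i
      have := Finset.inf'_le (f := fun i => -v i) (Finset.mem_univ i)
      linarith
  · exact ⟨1, one_pos, fun i => absurd (Nonempty.intro i) hm⟩

lemma exists_margin_fun {m : ℕ} {K : Set ℝ} (hK : IsCompact K) (hKne : K.Nonempty)
    {φ : ℝ → Fin m → ℝ} (hφ : ∀ i, ContinuousOn (fun τ => φ τ i) K) {γ : ℝ}
    (h : ∀ τ ∈ K, ∀ i, φ τ i < γ) : ∃ d > 0, ∀ τ ∈ K, ∀ i, φ τ i ≤ γ - d := by
  by_cases hm : Nonempty (Fin m)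
  · haveI := hm
    have hch : ∀ i : Fin m, ∃ d, 0 < d ∧ ∀ τ ∈ K, φ τ i ≤ γ - d := by
      intro i
      obtain ⟨τ0, hτ0, hmax0⟩ := hK.exists_isMaxOn hKne (hφ i)
      have hmax : ∀ τ ∈ K, φ τ i ≤ φ τ0 i := fun τ hτ => hmax0 hτ
      exact ⟨γ - φ τ0 i, by linarith [h τ0 hτ0 i], fun τ hτ => by linarith [hmax τ hτ]⟩
    choose d hd hbd using hch
    refine ⟨Finset.univ.inf' Finset.univ_nonempty d, ?_, ?_⟩
    · rw [gt_iff_lt, Finset.lt_inf'_iff]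
      exact fun i _ => hd i
    · intro τ hτ i
      have := Finset.inf'_le d (Finset.mem_univ i)
      linarith [hbd i τ hτ]
  · exact ⟨1, one_pos, fun τ hτ i => absurd (Nonempty.intro i) hm⟩

lemma mulVec_contOn {s : Set ℝ} {m k : ℕ} {M : ℝ → Matrix (Fin m) (Fin k) ℝ}
    {v : ℝ → Fin k → ℝ} (hM : ContinuousOn M s) (hv : ContinuousOn v s) :
    ContinuousOn (fun τ => M τ *ᵥ v τ) s := by
  rw [continuousOn_pi]
  intro i
  have heq : (fun τ => (M τ *ᵥ v τ) i) = fun τ => ∑ j, M τ i j * v τ j :=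
    funext fun τ => by simp [Matrix.mulVec, dotProduct]
  rw [heq]
  exact continuousOn_finset_sum _ fun j _ =>
    ((continuous_id.matrix_elem i j).comp_continuousOn hM).mul
      ((continuous_apply j).comp_continuousOn hv)

lemma entry_bound_of_sum {m k : ℕ} (M : Matrix (Fin m) (Fin k) ℝ) (i : Fin m) (j : Fin k) :
    |M i j| ≤ ∑ i', ∑ j', |M i' j'| := by
  refine le_trans (Finset.single_le_sum (f := fun j' => |M i j'|)
    (fun _ _ => abs_nonneg _) (Finset.mem_univ j)) ?_
  exact Finset.single_le_sum (f := fun i' => ∑ j', |M i' j'|)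
    (fun _ _ => Finset.sum_nonneg fun _ _ => abs_nonneg _) (Finset.mem_univ i)

/-- A square real matrix is Metzler if all its off-diagonal entries are nonnegative. -/
def Metzler {n : ℕ} (A : Matrix (Fin n) (Fin n) ℝ) : Prop :=
  ∀ i j, i ≠ j → 0 ≤ A i j

/-- Equivalence between the discrete-time (state-transition matrix) conditions and the
differential (clock-dependent) conditions for stability and hybrid `L∞×ℓ∞` performance
level `γ` under constant dwell-time `T̄`. -/
theorem constant_dwell_time_Linf_iff {n pc qc qd pd : ℕ} (Tb γ : ℝ) (hTb : 0 < Tb) (hγ : 0 < γ)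
    (At : ℝ → Matrix (Fin n) (Fin n) ℝ) (Ec : ℝ → Matrix (Fin n) (Fin pc) ℝ)
    (Cc : ℝ → Matrix (Fin qc) (Fin n) ℝ) (Fc : ℝ → Matrix (Fin qc) (Fin pc) ℝ)
    (J : Matrix (Fin n) (Fin n) ℝ) (Ed : Matrix (Fin n) (Fin pd) ℝ)
    (Cd : Matrix (Fin qd) (Fin n) ℝ) (Fd : Matrix (Fin qd) (Fin pd) ℝ)
    (hA : ContinuousOn At (Set.Icc 0 Tb)) (hEc : ContinuousOn Ec (Set.Icc 0 Tb))
    (hCc : ContinuousOn Cc (Set.Icc 0 Tb)) (hFc : ContinuousOn Fc (Set.Icc 0 Tb))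
    (hAM : ∀ τ ∈ Set.Icc (0 : ℝ) Tb, Metzler (At τ))
    (hEcp : ∀ τ ∈ Set.Icc (0 : ℝ) Tb, ∀ i j, 0 ≤ Ec τ i j)
    (hCcp : ∀ τ ∈ Set.Icc (0 : ℝ) Tb, ∀ i j, 0 ≤ Cc τ i j)
    (hFcp : ∀ τ ∈ Set.Icc (0 : ℝ) Tb, ∀ i j, 0 ≤ Fc τ i j)
    (hJp : ∀ i j, 0 ≤ J i j) (hEdp : ∀ i j, 0 ≤ Ed i j)
    (hCdp : ∀ i j, 0 ≤ Cd i j) (hFdp : ∀ i j, 0 ≤ Fd i j)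
    -- `Φ` is the state-transition matrix of `A` on `[0, T̄]`
    (Φ : ℝ → ℝ → Matrix (Fin n) (Fin n) ℝ)
    (hΦ0 : ∀ s ∈ Set.Icc (0 : ℝ) Tb, Φ s s = 1)
    (hΦ : ∀ s ∈ Set.Icc (0 : ℝ) Tb, ∀ τ ∈ Set.Icc s Tb, ∀ i j,
      HasDerivWithinAt (fun u => Φ u s i j) ((At τ * Φ τ s) i j) (Set.Icc s Tb) τ) :
    (∃ lam : Fin n → ℝ, (∀ i, 0 < lam i) ∧
      (∀ i, (J *ᵥ (Φ Tb 0 *ᵥ lam) - lam +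
        J *ᵥ (∫ s in (0:ℝ)..Tb, Φ Tb s *ᵥ (Ec s *ᵥ fun _ => (1:ℝ))) +
        Ed *ᵥ (fun _ => (1:ℝ))) i < 0) ∧
      (∀ τ ∈ Set.Icc (0 : ℝ) Tb, ∀ i,
        (Cc τ *ᵥ (Φ τ 0 *ᵥ lam + ∫ s in (0:ℝ)..τ, Φ τ s *ᵥ (Ec s *ᵥ fun _ => (1:ℝ))) +
          Fc τ *ᵥ (fun _ => (1:ℝ))) i < γ) ∧
      (∀ i, (Cd *ᵥ (Φ Tb 0 *ᵥ lam + ∫ s in (0:ℝ)..Tb, Φ Tb s *ᵥ (Ec s *ᵥ fun _ => (1:ℝ))) +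
        Fd *ᵥ (fun _ => (1:ℝ))) i < γ))
    ↔
    (∃ ζ ζ' : ℝ → Fin n → ℝ,
      (∀ τ ∈ Set.Icc (0 : ℝ) Tb, HasDerivWithinAt ζ (ζ' τ) (Set.Icc 0 Tb) τ) ∧
      ContinuousOn ζ' (Set.Icc 0 Tb) ∧
      (∀ i, 0 < ζ 0 i) ∧
      (∀ τ ∈ Set.Icc (0 : ℝ) Tb, ∀ i,
        (-(ζ' τ) + At τ *ᵥ ζ τ + Ec τ *ᵥ (fun _ => (1:ℝ))) i < 0) ∧
      (∀ τ ∈ Set.Icc (0 : ℝ) Tb, ∀ i,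
        (Cc τ *ᵥ ζ τ + Fc τ *ᵥ (fun _ => (1:ℝ))) i - γ < 0) ∧
      (∀ i, (J *ᵥ ζ Tb - ζ 0 + Ed *ᵥ (fun _ => (1:ℝ))) i < 0) ∧
      (∀ i, (Cd *ᵥ ζ Tb + Fd *ᵥ (fun _ => (1:ℝ))) i - γ < 0)) := by
  classical
  have h0mem : (0:ℝ) ∈ Set.Icc (0:ℝ) Tb := ⟨le_rfl, hTb.le⟩
  have hTmem : Tb ∈ Set.Icc (0:ℝ) Tb := ⟨hTb.le, le_rfl⟩
  have hAc : ∀ i j, ContinuousOn (fun τ => At τ i j) (Set.Icc (0:ℝ) Tb) :=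
    fun i j => (continuous_id.matrix_elem i j).comp_continuousOn hA
  obtain ⟨Ca0, hCa0b⟩ := isCompact_Icc.exists_bound_of_continuousOn
    (continuousOn_finset_sum (Finset.univ) (f := fun (i : Fin n) τ => ∑ j, |At τ i j|)
      fun i _ => continuousOn_finset_sum _ fun j _ => (hAc i j).abs)
  set Ca : ℝ := max Ca0 0 with hCadef
  have hCa0 : 0 ≤ Ca := le_max_right _ _
  have hCa : ∀ τ ∈ Set.Icc (0:ℝ) Tb, ∀ i j, |At τ i j| ≤ Ca := by
    intro τ hτ i j
    refine (entry_bound_of_sum (At τ) i j).trans ?_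
    have h2 := hCa0b τ hτ
    rw [Real.norm_eq_abs] at h2
    exact le_trans (le_abs_self _) (le_trans h2 (le_max_left _ _))
  have hc : ContinuousOn (fun s => Ec s *ᵥ (fun _ => (1:ℝ))) (Set.Icc (0:ℝ) Tb) :=
    mulVec_contOn hEc continuousOn_const
  obtain ⟨C0', hC0b⟩ := isCompact_Icc.exists_bound_of_continuousOn hc
  set C0 : ℝ := max C0' 0 with hC0def
  have hC00 : 0 ≤ C0 := le_max_right _ _
  have hcb : ∀ s ∈ Set.Icc (0:ℝ) Tb, ‖Ec s *ᵥ (fun _ => (1:ℝ))‖ ≤ C0 :=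
    fun s hs => le_trans (hC0b s hs) (le_max_left _ _)
  obtain ⟨y0, hy0def⟩ : ∃ y0 : (Fin n → ℝ) → ℝ → (Fin n → ℝ), y0 =
      fun v t => Φ t 0 *ᵥ v + ∫ s in (0:ℝ)..t, Φ t s *ᵥ (Ec s *ᵥ fun _ => (1:ℝ)) := ⟨_, rfl⟩
  have hyd : ∀ (v : Fin n → ℝ), ∀ τ ∈ Set.Icc (0:ℝ) Tb,
      HasDerivWithinAt (y0 v) (At τ *ᵥ (y0 v τ) + Ec τ *ᵥ (fun _ => (1:ℝ)))
        (Set.Icc (0:ℝ) Tb) τ := by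
    intro v τ hτ
    have h1 := vec_deriv hΦ h0mem v hτ
    have h2 := F_hasDeriv hTb hCa0 hCa hAc hΦ0 hΦ hc hC00 hcb hτ
    have h3 := h1.add h2
    rw [hy0def]
    simp only []
    refine h3.congr_deriv ?_
    rw [Matrix.mulVec_add]
    abel
  have hy00 : ∀ v, y0 v 0 = v := by
    intro v
    rw [hy0def]
    simp only []
    rw [intervalIntegral.integral_same, hΦ0 0 h0mem, Matrix.one_mulVec, add_zero]
  have hycont : ∀ v, ContinuousOn (y0 v) (Set.Icc (0:ℝ) Tb) :=
    fun v τ hτ => (hyd v τ hτ).continuousWithinAt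
  constructor
  · -- (a) → (b)
    rintro ⟨lam, hlam, hJa, hCca, hCda⟩
    have hc1 : ContinuousOn (fun _ : ℝ => (fun _ : Fin n => (1:ℝ))) (Set.Icc (0:ℝ) Tb) :=
      continuousOn_const
    have hcb1 : ∀ s ∈ Set.Icc (0:ℝ) Tb, ‖(fun _ : Fin n => (1:ℝ))‖ ≤ 1 := by
      intro s _
      rw [pi_norm_le_iff_of_nonneg zero_le_one]
      intro i
      simp
    obtain ⟨ψ, hψdef⟩ : ∃ ψ : ℝ → Fin n → ℝ, ψ =
        fun t => ∫ s in (0:ℝ)..t, Φ t s *ᵥ (fun _ : Fin n => (1:ℝ)) := ⟨_, rfl⟩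
    have hψd : ∀ τ ∈ Set.Icc (0:ℝ) Tb, HasDerivWithinAt ψ
        ((fun _ : Fin n => (1:ℝ)) + At τ *ᵥ ψ τ) (Set.Icc (0:ℝ) Tb) τ := by
      intro τ hτ
      have h2 := F_hasDeriv (c := fun _ : ℝ => (fun _ : Fin n => (1:ℝ)))
        hTb hCa0 hCa hAc hΦ0 hΦ hc1 zero_le_one hcb1 hτ
      rw [hψdef]
      exact h2
    have hψc : ContinuousOn ψ (Set.Icc (0:ℝ) Tb) :=
      fun τ hτ => (hψd τ hτ).continuousWithinAt
    -- bounds on perturbation terms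
    obtain ⟨Bc', hBcb⟩ := isCompact_Icc.exists_bound_of_continuousOn
      (mulVec_contOn hCc hψc)
    set Bc : ℝ := max Bc' 0 with hBcdef
    have hBc0 : 0 ≤ Bc := le_max_right _ _
    have hBc : ∀ τ ∈ Set.Icc (0:ℝ) Tb, ∀ i, |(Cc τ *ᵥ ψ τ) i| ≤ Bc := by
      intro τ hτ i
      have h1 : |(Cc τ *ᵥ ψ τ) i| ≤ ‖Cc τ *ᵥ ψ τ‖ := by
        rw [← Real.norm_eq_abs]
        exact norm_le_pi_norm _ i
      exact h1.trans (le_trans (hBcb τ hτ) (le_max_left _ _))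
    set BJ : ℝ := ‖J *ᵥ ψ Tb‖ with hBJdef
    have hBJ0 : 0 ≤ BJ := norm_nonneg _
    have hBJ : ∀ i, |(J *ᵥ ψ Tb) i| ≤ BJ := by
      intro i
      rw [← Real.norm_eq_abs]
      exact norm_le_pi_norm _ i
    set BD : ℝ := ‖Cd *ᵥ ψ Tb‖ with hBDdef
    have hBD0 : 0 ≤ BD := norm_nonneg _
    have hBD : ∀ i, |(Cd *ᵥ ψ Tb) i| ≤ BD := by
      intro i
      rw [← Real.norm_eq_abs]
      exact norm_le_pi_norm _ i
    -- margins
    obtain ⟨δc, hδc, hδcm⟩ := exists_margin_fun (φ := fun τ => Cc τ *ᵥ (y0 lam τ) +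
        Fc τ *ᵥ (fun _ => (1:ℝ))) isCompact_Icc (Set.nonempty_Icc.2 hTb.le)
      (fun i => (continuous_apply i).comp_continuousOn
        ((mulVec_contOn hCc (hycont lam)).add (mulVec_contOn hFc continuousOn_const)))
      (fun τ hτ i => by simp only [hy0def]; exact hCca τ hτ i)
    obtain ⟨δJ, hδJ, hJm⟩ := exists_margin (fun i => (J *ᵥ (Φ Tb 0 *ᵥ lam) - lam +
      J *ᵥ (∫ s in (0:ℝ)..Tb, Φ Tb s *ᵥ (Ec s *ᵥ fun _ => (1:ℝ))) +
      Ed *ᵥ (fun _ => (1:ℝ))) i) hJa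
    obtain ⟨δD, hδD, hDm⟩ := exists_margin (fun i => (Cd *ᵥ (y0 lam Tb) +
      Fd *ᵥ (fun _ => (1:ℝ))) i - γ) (fun i => by simp only [hy0def]; exact sub_neg.2 (hCda i))
    -- choose ε
    set ε : ℝ := min (min (δc / (Bc + 1)) (δJ / (BJ + 1))) (δD / (BD + 1)) with hεdef
    have hε : 0 < ε := lt_min (lt_min (by positivity) (by positivity)) (by positivity)
    have hε1 : ε ≤ δc / (Bc + 1) := le_trans (min_le_left _ _) (min_le_left _ _)
    have hε2 : ε ≤ δJ / (BJ + 1) := le_trans (min_le_left _ _) (min_le_right _ _)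
    have hε3 : ε ≤ δD / (BD + 1) := min_le_right _ _
    have hsmall : ∀ δ B b : ℝ, 0 < δ → 0 ≤ B → |b| ≤ B → ε ≤ δ / (B + 1) → ε * b < δ := by
      intro δ B b hδ hB hbB hεle
      have h1 : ε * b ≤ ε * |b| := mul_le_mul_of_nonneg_left (le_abs_self b) hε.le
      have h2 : ε * |b| ≤ (δ / (B + 1)) * B :=
        mul_le_mul hεle hbB (abs_nonneg b) (by positivity)
      have h3 : (δ / (B + 1)) * B < δ := by
        rw [div_mul_eq_mul_div, div_lt_iff₀ (by linarith)]
        nlinarith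
      linarith
    have hζ0eq : y0 lam 0 + ε • ψ 0 = lam := by
      rw [hy00 lam, hψdef]
      simp only []
      rw [intervalIntegral.integral_same]
      simp
    have hJsplit : J *ᵥ (y0 lam Tb) = J *ᵥ (Φ Tb 0 *ᵥ lam) +
        J *ᵥ (∫ s in (0:ℝ)..Tb, Φ Tb s *ᵥ (Ec s *ᵥ fun _ => (1:ℝ))) := by
      rw [hy0def]
      simp only []
      rw [Matrix.mulVec_add]
    refine ⟨fun t => y0 lam t + ε • ψ t,
      fun τ => At τ *ᵥ (y0 lam τ + ε • ψ τ) + Ec τ *ᵥ (fun _ => (1:ℝ)) +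
        ε • (fun _ : Fin n => (1:ℝ)), ?_, ?_, ?_, ?_, ?_, ?_, ?_⟩
    · -- derivative
      intro τ hτ
      have h1 := (hyd lam τ hτ).add ((hψd τ hτ).const_smul ε)
      show HasDerivWithinAt _ (At τ *ᵥ (y0 lam τ + ε • ψ τ) + Ec τ *ᵥ (fun _ => (1:ℝ)) +
        ε • (fun _ : Fin n => (1:ℝ))) (Set.Icc (0:ℝ) Tb) τ
      have heq : At τ *ᵥ (y0 lam τ + ε • ψ τ) + Ec τ *ᵥ (fun _ => (1:ℝ)) +
          ε • (fun _ : Fin n => (1:ℝ)) =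
          (At τ *ᵥ y0 lam τ + Ec τ *ᵥ fun _ => (1:ℝ)) +
            ε • ((fun _ : Fin n => (1:ℝ)) + At τ *ᵥ ψ τ) := by
        rw [Matrix.mulVec_add, Matrix.mulVec_smul, smul_add]
        abel
      rw [heq]
      exact h1
    · -- continuity of ζ'
      refine ContinuousOn.add (ContinuousOn.add ?_ hc) continuousOn_const
      exact mulVec_contOn hA ((hycont lam).add (hψc.const_smul ε))
    · -- positivity at 0
      intro i
      show 0 < (y0 lam 0 + ε • ψ 0) i
      rw [hζ0eq]
      exact hlam i
    · -- strict flow inequality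
      intro τ hτ i
      show (-(At τ *ᵥ (y0 lam τ + ε • ψ τ) + Ec τ *ᵥ (fun _ => (1:ℝ)) +
        ε • (fun _ : Fin n => (1:ℝ))) + At τ *ᵥ (y0 lam τ + ε • ψ τ) +
        Ec τ *ᵥ (fun _ => (1:ℝ))) i < 0
      simp only [Pi.add_apply, Pi.neg_apply, Pi.smul_apply, smul_eq_mul, mul_one]
      linarith [hε]
    · -- flow output inequality
      intro τ hτ i
      show (Cc τ *ᵥ (y0 lam τ + ε • ψ τ) + Fc τ *ᵥ (fun _ => (1:ℝ))) i - γ < 0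
      rw [Matrix.mulVec_add, Matrix.mulVec_smul]
      have hm := hδcm τ hτ i
      have hsm := hsmall δc Bc ((Cc τ *ᵥ ψ τ) i) hδc hBc0 (hBc τ hτ i) hε1
      simp only [Pi.add_apply, Pi.smul_apply, smul_eq_mul] at hm ⊢
      linarith
    · -- jump inequality
      intro i
      show (J *ᵥ (y0 lam Tb + ε • ψ Tb) - (y0 lam 0 + ε • ψ 0) +
        Ed *ᵥ (fun _ => (1:ℝ))) i < 0
      rw [hζ0eq, Matrix.mulVec_add, Matrix.mulVec_smul, hJsplit]
      have hm := hJm i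
      have hsm := hsmall δJ BJ ((J *ᵥ ψ Tb) i) hδJ hBJ0 (hBJ i) hε2
      simp only [Pi.add_apply, Pi.sub_apply, Pi.smul_apply, smul_eq_mul] at hm ⊢
      linarith
    · -- jump output inequality
      intro i
      show (Cd *ᵥ (y0 lam Tb + ε • ψ Tb) + Fd *ᵥ (fun _ => (1:ℝ))) i - γ < 0
      rw [Matrix.mulVec_add, Matrix.mulVec_smul]
      have hm := hDm i
      have hsm := hsmall δD BD ((Cd *ᵥ ψ Tb) i) hδD hBD0 (hBD i) hε3
      simp only [Pi.add_apply, Pi.sub_apply, Pi.smul_apply, smul_eq_mul] at hm ⊢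
      linarith
  · -- (b) → (a)
    rintro ⟨ζ, ζ', hζd, hζ'c, hζ0, hflow, hflowc, hjump, hjumpd⟩
    have hwd : ∀ τ ∈ Set.Icc (0:ℝ) Tb, HasDerivWithinAt (fun t => ζ t - y0 (ζ 0) t)
        (ζ' τ - (At τ *ᵥ (y0 (ζ 0) τ) + Ec τ *ᵥ (fun _ => (1:ℝ)))) (Set.Icc (0:ℝ) Tb) τ :=
      fun τ hτ => (hζd τ hτ).sub (hyd (ζ 0) τ hτ)
    have hstrict : ∀ τ ∈ Set.Icc (0:ℝ) Tb, ∀ i,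
        (At τ *ᵥ (ζ τ - y0 (ζ 0) τ)) i <
          (ζ' τ - (At τ *ᵥ (y0 (ζ 0) τ) + Ec τ *ᵥ (fun _ => (1:ℝ)))) i := by
      intro τ hτ i
      have hf := hflow τ hτ i
      rw [Matrix.mulVec_sub]
      simp only [Pi.add_apply, Pi.neg_apply, Pi.sub_apply] at hf ⊢
      linarith
    have hw0 : ∀ i, (0:ℝ) ≤ (ζ 0 - y0 (ζ 0) 0) i := by
      intro i
      rw [hy00 (ζ 0)]
      simp
    have hpos := metzler_invariance hTb (fun τ hτ => hAM τ hτ)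
      (w := fun t => ζ t - y0 (ζ 0) t)
      (w' := fun τ => ζ' τ - (At τ *ᵥ (y0 (ζ 0) τ) + Ec τ *ᵥ (fun _ => (1:ℝ))))
      hwd (fun τ hτ i => hstrict τ hτ i) hw0
    have hyle : ∀ τ ∈ Set.Icc (0:ℝ) Tb, ∀ i, y0 (ζ 0) τ i ≤ ζ τ i := by
      intro τ hτ i
      have := hpos τ hτ i
      simp only [Pi.sub_apply] at this
      linarith
    refine ⟨ζ 0, hζ0, ?_, ?_, ?_⟩
    · -- jump condition
      intro i
      have h1 := mulVec_mono J hJp (fun j => hyle Tb hTmem j) i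
      rw [hy0def] at h1
      simp only [] at h1
      rw [Matrix.mulVec_add] at h1
      have h2 := hjump i
      simp only [Pi.add_apply, Pi.sub_apply] at h1 h2 ⊢
      linarith
    · -- flow condition
      intro τ hτ i
      have h1 := mulVec_mono (Cc τ) (hCcp τ hτ) (fun j => hyle τ hτ j) i
      rw [hy0def] at h1
      simp only [] at h1
      have h2 := hflowc τ hτ i
      simp only [Pi.add_apply] at h1 h2 ⊢
      linarith
    · -- jump output condition
      intro i
      have h1 := mulVec_mono Cd hCdp (fun j => hyle Tb hTmem j) i
      rw [hy0def] at h1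
      simp only [] at h1
      have h2 := hjumpd i
      simp only [Pi.add_apply] at h1 h2 ⊢
      linarith
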